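/- Let C be a complete non-archimedean algebraically closed field of characteristic p, and let e = Π_{m≥0}(1 + c_m z^{p^m}) ∈ C[[z]] with 1/p ≤ |c_m| < 1 for all m. Then for each n ≥ 1 the logarithmic derivative-type coefficient a_n := ∂^{(n)}(e)/e lies in the Tate algebra C⟨z⟩; in fact a_n equals ∂^{(n)}(P_k)/P_k where P_k = Π_{m=0}^{k−1}(1 + c_m z^{p^m}) for any k with p^k > n, where ∂^{(n)} is the standard higher derivation ∂^{(n)}(z^j) = (j choose n) z^{j−n}. -/

import Mathlib

open PowerSeries Filter

variable {C : Type*} [NontriviallyNormedField C]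

/-- Membership in the Tate algebra `C⟨z⟩ ⊂ C[[z]]`: the coefficients tend to `0`. -/
def TateMem (f : C⟦X⟧) : Prop :=
  Tendsto (fun n => ‖PowerSeries.coeff n f‖) atTop (nhds 0)

/-- The standard higher derivation `∂^{(n)}` on `C[[z]]`, with `∂^{(n)}(z^j) = (j choose n) z^{j-n}`. -/
noncomputable def hderiv (n : ℕ) (f : C⟦X⟧) : C⟦X⟧ :=
  PowerSeries.mk fun j => ((j + n).choose n : C) * PowerSeries.coeff (j + n) f



lemma choose_modEq_choose_mod_pow {p : ℕ} [hp : Fact p.Prime] :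
    ∀ (k : ℕ) {n : ℕ}, n < p ^ k → ∀ m : ℕ, m.choose n ≡ (m % p ^ k).choose n [MOD p]
  | 0, n, hn, m => by
      obtain rfl : n = 0 := by simpa using hn
      simp [Nat.ModEq.refl]
  | (k+1), n, hn, m => by
      have hp1 : 0 < p := hp.out.pos
      have h1 : m.choose n ≡ (m % p).choose (n % p) * (m / p).choose (n / p) [MOD p] :=
        Choose.choose_modEq_choose_mod_mul_choose_div_nat
      have h2 : (m % p ^ (k+1)).choose n ≡
          ((m % p ^ (k+1)) % p).choose (n % p) * ((m % p ^ (k+1)) / p).choose (n / p) [MOD p] :=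
        Choose.choose_modEq_choose_mod_mul_choose_div_nat
      have e1 : (m % p ^ (k+1)) % p = m % p :=
        Nat.mod_mod_of_dvd _ (dvd_pow_self p k.succ_ne_zero)
      have e2 : (m % p ^ (k+1)) / p = (m / p) % p ^ k := by
        rw [pow_succ']
        exact Nat.mod_mul_right_div_self m p (p ^ k)
      have hnp : n / p < p ^ k := Nat.div_lt_of_lt_mul (by rwa [← pow_succ'])
      have ih := choose_modEq_choose_mod_pow k hnp (m / p)
      rw [e1, e2] at h2
      exact (h1.trans ((Nat.ModEq.refl _).mul ih)).trans h2.symm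

lemma choose_cast_eq_mod {p : ℕ} [Fact p.Prime] [CharP C p] {n k : ℕ} (hn : n < p ^ k) (m : ℕ) :
    ((m.choose n : ℕ) : C) = (((m % p ^ k).choose n : ℕ) : C) :=
  (CharP.natCast_eq_natCast C p).mpr (choose_modEq_choose_mod_pow k hn m)

lemma hderiv_mul_of_support {p k n : ℕ} [Fact p.Prime] [CharP C p] (hn : n < p ^ k)
    (P T : C⟦X⟧) (hT : ∀ j, ¬ (p ^ k ∣ j) → PowerSeries.coeff j T = 0) :
    hderiv n (P * T) = hderiv n P * T := by
  ext j
  rw [hderiv, coeff_mk, coeff_mul, coeff_mul,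
    Finset.Nat.sum_antidiagonal_eq_sum_range_succ_mk,
    Finset.Nat.sum_antidiagonal_eq_sum_range_succ_mk, Finset.mul_sum]
  simp only [hderiv, coeff_mk]
  rw [Finset.range_eq_Ico,
    ← Finset.sum_Ico_consecutive _ (Nat.zero_le n) (by omega : n ≤ j + n + 1)]
  have hzero : ∑ i ∈ Finset.Ico 0 n,
      ((j + n).choose n : C) * (coeff i P * coeff (j + n - i) T) = 0 := by
    apply Finset.sum_eq_zero
    intro i hi
    have hi' : i < n := (Finset.mem_Ico.mp hi).2
    by_cases hTc : coeff (j + n - i) T = 0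
    · rw [hTc, mul_zero, mul_zero]
    · have hd : p ^ k ∣ j + n - i := by
        by_contra h; exact hTc (hT _ h)
      have hmod : i ≡ j + n [MOD p ^ k] := (Nat.modEq_iff_dvd' (by omega)).mpr hd
      have : (((j + n).choose n : ℕ) : C) = 0 := by
        rw [choose_cast_eq_mod hn, ← hmod, Nat.mod_eq_of_lt (lt_trans hi' hn),
          Nat.choose_eq_zero_of_lt hi', Nat.cast_zero]
      rw [this, zero_mul]
  rw [hzero, zero_add, Finset.sum_Ico_eq_sum_range,
    show j + n + 1 - n = j + 1 from by omega]
  refine Finset.sum_congr (by rw [Finset.range_eq_Ico]) fun i hi => ?_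
  have hij : i ≤ j := by simpa [Nat.lt_succ_iff] using hi
  rw [show n + i = i + n from by omega, show j + n - (i + n) = j - i from by omega]
  by_cases hTc : coeff (j - i) T = 0
  · simp [hTc]
  · have hd : p ^ k ∣ j - i := by
      by_contra h; exact hTc (hT _ h)
    have hmod : i + n ≡ j + n [MOD p ^ k] :=
      (Nat.modEq_iff_dvd' (by omega)).mpr (by rw [show j + n - (i + n) = j - i from by omega]; exact hd)
    have : (((j + n).choose n : ℕ) : C) = (((i + n).choose n : ℕ) : C) := by
      rw [choose_cast_eq_mod hn, choose_cast_eq_mod hn (i + n), hmod]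
    rw [this]; ring




lemma tateMem_of_eventually_zero {f : C⟦X⟧} {d : ℕ} (h : ∀ j, d ≤ j → coeff j f = 0) :
    TateMem f := by
  have hev : (fun j => ‖coeff j f‖) =ᶠ[atTop] fun _ => (0 : ℝ) :=
    eventually_atTop.2 ⟨d, fun j hj => by simp [h j hj]⟩
  exact Tendsto.congr' hev.symm tendsto_const_nhds

lemma tateMem_mul [IsUltrametricDist C] {f g : C⟦X⟧} (hf : TateMem f) (hg : TateMem g) :
    TateMem (f * g) := by
  obtain ⟨Mf, hMf⟩ := hf.bddAbove_range
  obtain ⟨Mg, hMg⟩ := hg.bddAbove_range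
  set M : ℝ := max (max Mf Mg) 1 with hM
  have hM1 : 0 < M := lt_of_lt_of_le one_pos (le_max_right _ _)
  have hbf : ∀ i, ‖coeff i f‖ ≤ M := fun i =>
    le_trans (hMf (Set.mem_range_self i)) (le_trans (le_max_left _ _) (le_max_left _ _))
  have hbg : ∀ i, ‖coeff i g‖ ≤ M := fun i =>
    le_trans (hMg (Set.mem_range_self i)) (le_trans (le_max_right _ _) (le_max_left _ _))
  rw [TateMem, Metric.tendsto_atTop]
  intro ε hε
  have hε2 : 0 < ε / (2 * M) := by positivity
  obtain ⟨N1, hN1⟩ := Metric.tendsto_atTop.mp hf (ε / (2 * M)) hε2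
  obtain ⟨N2, hN2⟩ := Metric.tendsto_atTop.mp hg (ε / (2 * M)) hε2
  refine ⟨N1 + N2, fun n hn => ?_⟩
  have hhalf : ε / (2 * M) * M = ε / 2 := by field_simp
  have key : ‖coeff n (f * g)‖ ≤ ε / 2 := by
    rw [coeff_mul]
    apply IsUltrametricDist.norm_sum_le_of_forall_le_of_nonneg (by positivity)
    rintro ⟨i, j⟩ hij
    have hij' : i + j = n := Finset.HasAntidiagonal.mem_antidiagonal.mp hij
    rw [norm_mul]
    rcases le_or_gt N1 i with h | h
    · have h1 := hN1 i h
      rw [Real.dist_eq, sub_zero, abs_of_nonneg (norm_nonneg _)] at h1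
      calc ‖coeff i f‖ * ‖coeff j g‖ ≤ ε / (2 * M) * M :=
            mul_le_mul h1.le (hbg j) (norm_nonneg _) hε2.le
        _ = ε / 2 := hhalf
    · have h1 := hN2 j (by omega)
      rw [Real.dist_eq, sub_zero, abs_of_nonneg (norm_nonneg _)] at h1
      calc ‖coeff i f‖ * ‖coeff j g‖ ≤ M * (ε / (2 * M)) :=
            mul_le_mul (hbf i) h1.le (norm_nonneg _) hM1.le
        _ = ε / 2 := by rw [mul_comm]; exact hhalf
  rw [Real.dist_eq, sub_zero, abs_of_nonneg (norm_nonneg _)]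
  calc ‖coeff n (f * g)‖ ≤ ε / 2 := key
    _ < ε := by linarith

lemma tateMem_inv_one_add {c : C} (hc : ‖c‖ < 1) (q : ℕ) (hq : 0 < q) :
    TateMem ((1 + PowerSeries.C c * X ^ q)⁻¹) := by
  set S : C⟦X⟧ := PowerSeries.mk fun j => if q ∣ j then (-c) ^ (j / q) else 0 with hS
  have hconst : constantCoeff (1 + PowerSeries.C c * X ^ q) ≠ 0 := by
    rw [map_add, map_one, map_mul, constantCoeff_C, map_pow, constantCoeff_X,
      zero_pow hq.ne', mul_zero, add_zero]
    exact one_ne_zero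
  have hSeq : (1 + PowerSeries.C c * X ^ q)⁻¹ = S := by
    rw [PowerSeries.inv_eq_iff_mul_eq_one hconst]
    ext j
    rw [mul_add, mul_one, map_add,
      show S * (PowerSeries.C c * X ^ q) = PowerSeries.C c * (S * X ^ q) from by ring,
      coeff_C_mul, coeff_mul_X_pow']
    simp only [hS, coeff_mk, coeff_one]
    rcases eq_or_ne j 0 with rfl | hj0
    · rw [if_pos (dvd_zero q), if_neg (by omega), if_pos rfl, Nat.zero_div, pow_zero,
        mul_zero, add_zero]
    · rw [if_neg hj0]
      by_cases hqj : q ≤ j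
      · rw [if_pos hqj]
        by_cases hdvd : q ∣ j
        · obtain ⟨t, rfl⟩ := hdvd
          obtain ⟨s, rfl⟩ : ∃ s, t = s + 1 := by
            refine ⟨t - 1, ?_⟩
            have : t ≠ 0 := by rintro rfl; simp at hj0
            omega
          have e1 : q * (s + 1) / q = s + 1 := Nat.mul_div_cancel_left _ hq
          have e2 : q * (s + 1) - q = q * s := by simp [Nat.mul_succ]
          rw [if_pos ⟨s + 1, rfl⟩, e1, e2, if_pos ⟨s, rfl⟩, Nat.mul_div_cancel_left _ hq,
            pow_succ]
          ring
        · rw [if_neg hdvd, if_neg (fun h => hdvd (by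
            have h2 := Nat.dvd_add h (dvd_refl q)
            rwa [Nat.sub_add_cancel hqj] at h2))]
          simp
      · rw [if_neg hqj,
          if_neg (fun hdvd => hqj (Nat.le_of_dvd (Nat.pos_of_ne_zero hj0) hdvd))]
        simp
  rw [hSeq]
  have hb : ∀ j, ‖coeff j S‖ ≤ ‖c‖ ^ (j / q) := by
    intro j
    rw [hS, coeff_mk]
    split_ifs
    · rw [norm_pow, norm_neg]
    · rw [norm_zero]; positivity
  have hdiv : Tendsto (fun j : ℕ => j / q) atTop atTop :=
    tendsto_atTop_atTop.2 fun b => ⟨b * q, fun j hj => (Nat.le_div_iff_mul_le hq).2 hj⟩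
  have hlim : Tendsto (fun j : ℕ => ‖c‖ ^ (j / q)) atTop (nhds 0) :=
    (tendsto_pow_atTop_nhds_zero_of_lt_one (norm_nonneg c) hc).comp hdiv
  exact squeeze_zero (fun j => norm_nonneg _) hb hlim

lemma evzero_mul {f g : C⟦X⟧} {d e : ℕ} (hf : ∀ j, d ≤ j → coeff j f = 0)
    (hg : ∀ j, e ≤ j → coeff j g = 0) : ∀ j, d + e ≤ j → coeff j (f * g) = 0 := by
  intro j hj
  rw [coeff_mul]
  apply Finset.sum_eq_zero
  rintro ⟨a, b⟩ hab
  have hab' : a + b = j := Finset.HasAntidiagonal.mem_antidiagonal.mp hab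
  rcases le_or_gt d a with h | h
  · rw [hf a h, zero_mul]
  · rw [hg b (by omega), mul_zero]

lemma evzero_factor (c : C) (q : ℕ) :
    ∀ j, q + 1 ≤ j → coeff j (1 + PowerSeries.C c * X ^ q) = 0 := by
  intro j hj
  rw [map_add, coeff_one, if_neg (by omega), coeff_C_mul, coeff_X_pow, if_neg (by omega)]
  simp

lemma evzero_prod (c : ℕ → C) (p : ℕ) (k : ℕ) :
    ∃ d, ∀ j, d ≤ j →
      coeff j (∏ m ∈ Finset.range k, (1 + PowerSeries.C (c m) * X ^ (p ^ m))) = 0 := by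
  induction k with
  | zero => exact ⟨1, fun j hj => by
      rw [Finset.prod_range_zero, coeff_one, if_neg (by omega)]⟩
  | succ k ih =>
    obtain ⟨d, hd⟩ := ih
    exact ⟨d + (p ^ k + 1), fun j hj => by
      rw [Finset.prod_range_succ]
      exact evzero_mul hd (evzero_factor _ _) j hj⟩

lemma tate_inv_prod [IsUltrametricDist C] {p : ℕ} (hp : 0 < p) (c : ℕ → C)
    (hc : ∀ m, ‖c m‖ < 1) (k : ℕ) :
    TateMem ((∏ m ∈ Finset.range k, (1 + PowerSeries.C (c m) * X ^ (p ^ m)))⁻¹) := by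
  induction k with
  | zero =>
    rw [Finset.prod_range_zero,
      show (1 : C⟦X⟧)⁻¹ = 1 by
        rw [PowerSeries.inv_eq_iff_mul_eq_one (by simp), one_mul]]
    exact tateMem_of_eventually_zero (d := 1) fun j hj => by
      rw [coeff_one, if_neg (by omega)]
  | succ k ih =>
    rw [Finset.prod_range_succ, PowerSeries.mul_inv_rev]
    exact tateMem_mul (tateMem_inv_one_add (hc k) _ (pow_pos hp k)) ih

/-- (Example 4.1.) Let `C` be a complete non-archimedean algebraically closed field of
characteristic `p > 0`, and let `e = Π_{m≥0}(1 + c_m z^{p^m}) ∈ C[[z]]` with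
`1/p ≤ |c_m| < 1` for all `m`; the infinite product is encoded by requiring that for every
`k` one has `e = P_k · T_k`, where `P_k = Π_{m=0}^{k−1}(1 + c_m z^{p^m})` and `T_k` is a
power series in `z^{p^k}` with constant term `1`. Then for every `n ≥ 1` the coefficient
`a_n := ∂^{(n)}(e)/e` lies in the Tate algebra `C⟨z⟩`; in fact, for any `k` with `p^k > n`,
`∂^{(n)}(e)·P_k = ∂^{(n)}(P_k)·e` and `a_n = ∂^{(n)}(P_k)/P_k ∈ C⟨z⟩`. -/
theorem stmt18 (p : ℕ) [Fact p.Prime] [CompleteSpace C] [IsUltrametricDist C]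
    [IsAlgClosed C] [CharP C p]
    (c : ℕ → C) (hc : ∀ m, 1 / (p : ℝ) ≤ ‖c m‖ ∧ ‖c m‖ < 1)
    (P : ℕ → C⟦X⟧)
    (hP : ∀ k, P k = ∏ m ∈ Finset.range k, (1 + PowerSeries.C (c m) * X ^ (p ^ m)))
    (e : C⟦X⟧)
    (he : ∀ k, ∃ T : C⟦X⟧, (∀ j, ¬ (p ^ k ∣ j) → PowerSeries.coeff j T = 0) ∧
      PowerSeries.constantCoeff T = 1 ∧ e = P k * T) :
    ∀ n : ℕ, 1 ≤ n →
      TateMem (hderiv n e * e⁻¹) ∧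
      ∀ k : ℕ, n < p ^ k →
        hderiv n e * P k = hderiv n (P k) * e ∧
        hderiv n e * e⁻¹ = hderiv n (P k) * (P k)⁻¹ := by
  have hp2 : 1 < p := (Fact.out : p.Prime).one_lt
  have hPconst : ∀ k, constantCoeff (P k) = 1 := by
    intro k
    rw [hP, map_prod]
    refine Finset.prod_eq_one fun m _ => ?_
    rw [map_add, map_one, map_mul, constantCoeff_C, map_pow, constantCoeff_X,
      zero_pow (pow_pos (by omega) m).ne', mul_zero, add_zero]
  have heconst : constantCoeff e = 1 := by
    obtain ⟨T, hT, hT1, hMul⟩ := he 0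
    rw [hMul, map_mul, hPconst, hT1, one_mul]
  intro n hn
  have key : ∀ k : ℕ, n < p ^ k → hderiv n e * P k = hderiv n (P k) * e ∧
      hderiv n e * e⁻¹ = hderiv n (P k) * (P k)⁻¹ := by
    intro k hk
    obtain ⟨T, hT, hT1, hMul⟩ := he k
    have h1 : hderiv n e = hderiv n (P k) * T := by
      rw [hMul]; exact hderiv_mul_of_support hk _ _ hT
    have E1 : hderiv n e * P k = hderiv n (P k) * e := by
      rw [h1, hMul]; ring
    refine ⟨E1, ?_⟩
    have hPk : constantCoeff (P k) ≠ 0 := by rw [hPconst]; exact one_ne_zero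
    have hek : constantCoeff e ≠ 0 := by rw [heconst]; exact one_ne_zero
    have h2 : P k * (P k)⁻¹ = 1 := PowerSeries.mul_inv_cancel _ hPk
    have h3 : e * e⁻¹ = 1 := PowerSeries.mul_inv_cancel _ hek
    calc hderiv n e * e⁻¹ = hderiv n e * e⁻¹ * (P k * (P k)⁻¹) := by rw [h2, mul_one]
      _ = hderiv n e * P k * (e⁻¹ * (P k)⁻¹) := by ring
      _ = hderiv n (P k) * e * (e⁻¹ * (P k)⁻¹) := by rw [E1]
      _ = hderiv n (P k) * (P k)⁻¹ * (e * e⁻¹) := by ring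
      _ = hderiv n (P k) * (P k)⁻¹ := by rw [h3, mul_one]
  refine ⟨?_, key⟩
  have hkn : n < p ^ n := Nat.lt_pow_self hp2
  rw [(key n hkn).2, hP n]
  obtain ⟨d, hd⟩ := evzero_prod c p n
  exact tateMem_mul
    (tateMem_of_eventually_zero (d := d) fun j hj => by
      rw [hderiv, coeff_mk, hd (j + n) (by omega), mul_zero])
    (tate_inv_prod (by omega) c (fun m => (hc m).2) n)
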